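/- For every δ > 0 the function Ψ_δ is strictly decreasing on (γ_δ, ∞). -/

import Mathlib

open MeasureTheory intervalIntegral Set

lemma stmt8_aux_int {x : ℝ} (hx : 0 < x) :
    IntegrableOn (fun u : ℝ => 1 / (u * Real.exp u)) (Set.Ioi x) := by
  have hmeas : AEStronglyMeasurable (fun u : ℝ => 1 / (u * Real.exp u))
      (volume.restrict (Set.Ioi x)) := by
    apply ContinuousOn.aestronglyMeasurable _ measurableSet_Ioi
    apply ContinuousOn.div continuousOn_const
      (continuousOn_id.mul Real.continuous_exp.continuousOn)
    intro u hu
    have h0 : 0 < u := hx.trans hu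
    exact mul_ne_zero h0.ne' (Real.exp_pos u).ne'
  apply Integrable.mono' (((exp_neg_integrableOn_Ioi x one_pos)).const_mul (1/x)) hmeas
  filter_upwards [ae_restrict_mem measurableSet_Ioi] with u hu
  have hux : x < u := hu
  have hu0 : 0 < u := hx.trans hux
  rw [Real.norm_eq_abs, abs_of_nonneg (by positivity)]
  rw [neg_one_mul, Real.exp_neg, one_div, mul_inv, one_div]
  have hinv : u⁻¹ ≤ x⁻¹ := by
    apply inv_anti₀ hx hux.le
  exact mul_le_mul_of_nonneg_right hinv (inv_nonneg.2 (Real.exp_pos u).le)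

lemma stmt8_aux_p_lt {δ y₁ y₂ : ℝ} (h0 : 0 < y₁) (hd : δ ≤ y₁) (h : y₁ < y₂) :
    1 + δ / y₁ + Real.log y₁ < 1 + δ / y₂ + Real.log y₂ := by
  have h02 : 0 < y₂ := h0.trans h
  have hlog : Real.log (y₁ / y₂) < y₁ / y₂ - 1 :=
    Real.log_lt_sub_one_of_pos (div_pos h0 h02) (by
      intro h'
      rw [div_eq_one_iff_eq h02.ne'] at h'
      exact h.ne h')
  rw [Real.log_div h0.ne' h02.ne'] at hlog
  have key : δ / y₁ - δ / y₂ ≤ 1 - y₁ / y₂ := by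
    have hmul : (δ / y₁ - δ / y₂) * (y₁ * y₂) ≤ (1 - y₁ / y₂) * (y₁ * y₂) := by
      have e1 : (δ / y₁ - δ / y₂) * (y₁ * y₂) = δ * (y₂ - y₁) := by field_simp
      have e2 : (1 - y₁ / y₂) * (y₁ * y₂) = y₁ * (y₂ - y₁) := by field_simp
      rw [e1, e2]
      nlinarith
    exact le_of_mul_le_mul_right hmul (mul_pos h0 h02)
  linarith

lemma stmt8_aux_subst (z b : ℝ) (hb : 1 ≤ b) (hzb : 0 < z - Real.log b) :
    ∫ u in (z - Real.log b)..z, 1 / (u * Real.exp u)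
      = Real.exp (-z) * ∫ v in (1:ℝ)..b, 1 / (z - Real.log v) := by
  have huIcc : uIcc (1:ℝ) b = Icc 1 b := uIcc_of_le hb
  have hmem : ∀ v ∈ Icc (1:ℝ) b, 0 < v ∧ 0 < z - Real.log v := by
    intro v hv
    have hv0 : (0:ℝ) < v := lt_of_lt_of_le one_pos hv.1
    refine ⟨hv0, lt_of_lt_of_le hzb ?_⟩
    have := Real.log_le_log hv0 hv.2
    linarith
  have hderiv : ∀ v ∈ uIcc (1:ℝ) b,
      HasDerivAt (fun v : ℝ => z - Real.log v) (-v⁻¹) v := by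
    intro v hv
    rw [huIcc] at hv
    exact (Real.hasDerivAt_log (hmem v hv).1.ne').const_sub z
  have hcont' : ContinuousOn (fun v : ℝ => -v⁻¹) (uIcc (1:ℝ) b) := by
    rw [huIcc]
    exact (continuousOn_inv₀.mono (fun v hv => (hmem v hv).1.ne')).neg
  have hg : ContinuousOn (fun u : ℝ => 1 / (u * Real.exp u))
      ((fun v : ℝ => z - Real.log v) '' uIcc (1:ℝ) b) := by
    apply ContinuousOn.div continuousOn_const
      (continuousOn_id.mul Real.continuous_exp.continuousOn)
    rintro u ⟨v, hv, rfl⟩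
    rw [huIcc] at hv
    have := (hmem v hv).2
    exact mul_ne_zero this.ne' (Real.exp_pos _).ne'
  have key := integral_comp_smul_deriv' hderiv hcont' hg
  have hlhs : (∫ v in (1:ℝ)..b, (-v⁻¹) • (fun u : ℝ => 1 / (u * Real.exp u)) (z - Real.log v))
      = ∫ v in (1:ℝ)..b, -(Real.exp (-z) * (1 / (z - Real.log v))) := by
    apply integral_congr
    intro v hv
    rw [huIcc] at hv
    obtain ⟨hv0, hzv⟩ := hmem v hv
    have hev : Real.exp (z - Real.log v) = Real.exp z / v := by
      rw [Real.exp_sub, Real.exp_log hv0]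
    simp only [smul_eq_mul, hev, Real.exp_neg]
    have he : Real.exp z ≠ 0 := (Real.exp_pos z).ne'
    field_simp
  simp only [Function.comp] at key
  rw [hlhs] at key
  simp only [Real.log_one, sub_zero] at key
  rw [intervalIntegral.integral_neg, intervalIntegral.integral_const_mul] at key
  rw [intervalIntegral.integral_symm (z - Real.log b) z] at key
  linarith [key]

lemma stmt8_aux_scale {z k a' b' : ℝ} (hk : 0 < k) (ha' : 0 < a') (hab : a' ≤ b')
    (hpos : 0 < z - Real.log k - Real.log b') :
    ∫ v in (k*a')..(k*b'), 1/(z - Real.log v)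
      = k * ∫ w in a'..b', 1/(z - Real.log k - Real.log w) := by
  have huIcc : uIcc a' b' = Icc a' b' := uIcc_of_le hab
  have hmem : ∀ w ∈ Icc a' b', 0 < w ∧ 0 < z - Real.log k - Real.log w := by
    intro w hw
    have hw0 : 0 < w := lt_of_lt_of_le ha' hw.1
    have := Real.log_le_log hw0 hw.2
    exact ⟨hw0, by linarith⟩
  have hderiv : ∀ w ∈ uIcc a' b', HasDerivAt (fun w : ℝ => k * w) k w := by
    intro w _
    simpa using (hasDerivAt_id w).const_mul k
  have hg : ContinuousOn (fun v : ℝ => 1/(z - Real.log v)) ((fun w => k*w) '' uIcc a' b') := by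
    apply ContinuousOn.div continuousOn_const
    · apply continuousOn_const.sub
      apply Real.continuousOn_log.mono
      rintro v ⟨w, hw, rfl⟩
      rw [huIcc] at hw
      simp only [Set.mem_compl_iff, Set.mem_singleton_iff]
      exact (mul_pos hk (hmem w hw).1).ne'
    · rintro v ⟨w, hw, rfl⟩
      rw [huIcc] at hw
      obtain ⟨hw0, hzw⟩ := hmem w hw
      rw [Real.log_mul hk.ne' hw0.ne']
      intro h
      rw [sub_eq_zero] at h
      linarith
  have key := integral_comp_smul_deriv' hderiv continuousOn_const hg
  have hcongr : (∫ w in a'..b', k • ((fun v : ℝ => 1/(z - Real.log v)) ∘ (fun w => k*w)) w)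
      = ∫ w in a'..b', k * (1/(z - Real.log k - Real.log w)) := by
    apply integral_congr
    intro w hw
    rw [huIcc] at hw
    simp only [Function.comp, smul_eq_mul]
    rw [Real.log_mul hk.ne' (hmem w hw).1.ne']
    ring_nf
  rw [hcongr, intervalIntegral.integral_const_mul] at key
  exact key.symm

lemma stmt8_aux_ii {c a b : ℝ} (ha : 0 < a) (hab : a ≤ b) (hc : 0 < c - Real.log b) :
    IntervalIntegrable (fun v : ℝ => 1/(c - Real.log v)) volume a b := by
  apply ContinuousOn.intervalIntegrable
  rw [uIcc_of_le hab]
  have hmem : ∀ v ∈ Icc a b, 0 < v ∧ 0 < c - Real.log v := by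
    intro v hv
    have hv0 : 0 < v := lt_of_lt_of_le ha hv.1
    have := Real.log_le_log hv0 hv.2
    exact ⟨hv0, by linarith⟩
  apply ContinuousOn.div continuousOn_const
  · apply continuousOn_const.sub
    apply Real.continuousOn_log.mono
    intro v hv
    simp only [Set.mem_compl_iff, Set.mem_singleton_iff]
    exact (hmem v hv).1.ne'
  · intro v hv
    exact (hmem v hv).2.ne'

/- STATEMENT 8: For every δ > 0 the function Ψ_δ is strictly decreasing on (γ_δ, ∞). -/
theorem stmt_8 (δ : ℝ) (hδ : 0 < δ)
    (φ : ℝ → ℝ) (hφ : ∀ x : ℝ, φ x = ∫ u in Set.Ioi x, 1 / (u * Real.exp u))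
    (q : ℝ → ℝ)
    (hq₁ : ∀ y : ℝ, max δ 1 ≤ y → q (1 + δ / y + Real.log y) = y)
    (hq₂ : ∀ z : ℝ, min (1 + δ) (2 + Real.log δ) ≤ z →
      max δ 1 ≤ q z ∧ 1 + δ / q z + Real.log (q z) = z)
    (Ψ : ℝ → ℝ)
    (hΨ : ∀ z : ℝ, Ψ z = Real.exp (-z) / (φ (z - Real.log (q z)) - φ z)) :
    StrictAntiOn Ψ (Set.Ioi (min (1 + δ) (2 + Real.log δ))) := by
  have hγ : min (1 + δ) (2 + Real.log δ) = 2 + Real.log δ := by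
    apply min_eq_right
    have := Real.log_le_sub_one_of_pos hδ
    linarith
  rcases lt_or_ge δ 1 with hδ1 | hδ1
  · -- contradiction case: hypotheses are inconsistent for δ < 1
    exfalso
    obtain ⟨h1, h2⟩ := hq₂ (2 + Real.log δ) (by rw [hγ])
    set y := q (2 + Real.log δ) with hy
    have hy1 : (1:ℝ) ≤ y := le_trans (le_max_right δ 1) h1
    have hy0 : (0:ℝ) < y := lt_of_lt_of_le one_pos hy1
    have hlog : 1 - y⁻¹ ≤ Real.log y := by
      have := Real.log_le_sub_one_of_pos (inv_pos.2 hy0)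
      rw [Real.log_inv] at this
      linarith
    have hinv1 : y⁻¹ ≤ 1 := inv_le_one_of_one_le₀ hy1
    have hdiv : δ / y = δ * y⁻¹ := div_eq_mul_inv δ y
    have hstrict : Real.log δ < δ - 1 := Real.log_lt_sub_one_of_pos hδ hδ1.ne
    rw [hdiv] at h2
    nlinarith [h2, hlog, hinv1, hstrict, mul_nonneg (sub_nonneg.2 hδ1.le) (sub_nonneg.2 hinv1)]
  · -- main case δ ≥ 1
    have hfacts : ∀ z : ℝ, 2 + Real.log δ < z → δ < q z := by
      intro z hz
      obtain ⟨h1, h2⟩ := hq₂ z (by rw [hγ]; exact hz.le)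
      have hδq : δ ≤ q z := le_trans (le_max_left δ 1) h1
      rcases eq_or_lt_of_le hδq with he | h
      · exfalso
        rw [← he, div_self hδ.ne'] at h2
        linarith
      · exact h
    have hrep : ∀ z : ℝ, 2 + Real.log δ < z →
        φ (z - Real.log (q z)) - φ z
          = Real.exp (-z) * ∫ v in (1:ℝ)..(q z), 1/(z - Real.log v) := by
      intro z hz
      obtain ⟨h1, h2⟩ := hq₂ z (by rw [hγ]; exact hz.le)
      have hb1 : 1 < q z := lt_of_le_of_lt hδ1 (hfacts z hz)
      have hb0 : 0 < q z := lt_trans one_pos hb1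
      have hlq : 0 < Real.log (q z) := Real.log_pos hb1
      have ha : z - Real.log (q z) = 1 + δ / q z := by linarith
      have ha0 : 0 < z - Real.log (q z) := by rw [ha]; positivity
      have haz : z - Real.log (q z) < z := by linarith
      have hz0 : 0 < z := lt_trans ha0 haz
      have hsplit : φ (z - Real.log (q z)) - φ z
          = ∫ u in (z - Real.log (q z))..z, 1/(u * Real.exp u) := by
        rw [hφ (z - Real.log (q z)), hφ z, intervalIntegral.integral_of_le haz.le]
        have hU : Set.Ioc (z - Real.log (q z)) z ∪ Set.Ioi z = Set.Ioi (z - Real.log (q z)) :=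
          Set.Ioc_union_Ioi_eq_Ioi haz.le
        rw [← hU, MeasureTheory.setIntegral_union (Set.Ioc_disjoint_Ioi le_rfl) measurableSet_Ioi
          ((stmt8_aux_int ha0).mono_set Set.Ioc_subset_Ioi_self) (stmt8_aux_int hz0)]
        ring
      rw [hsplit]
      exact stmt8_aux_subst z (q z) hb1.le ha0
    have hFpos : ∀ z : ℝ, 2 + Real.log δ < z →
        0 < ∫ v in (1:ℝ)..(q z), 1/(z - Real.log v) := by
      intro z hz
      obtain ⟨h1, h2⟩ := hq₂ z (by rw [hγ]; exact hz.le)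
      have hb1 : 1 < q z := lt_of_le_of_lt hδ1 (hfacts z hz)
      have hb0 : 0 < q z := lt_trans one_pos hb1
      have hc : 0 < z - Real.log (q z) := by
        have : z - Real.log (q z) = 1 + δ / q z := by linarith
        rw [this]; positivity
      apply intervalIntegral_pos_of_pos_on (stmt8_aux_ii one_pos hb1.le hc) _ hb1
      intro v hv
      have hv0 : (0:ℝ) < v := lt_trans one_pos hv.1
      have : Real.log v < Real.log (q z) := Real.log_lt_log hv0 hv.2
      have : 0 < z - Real.log v := by linarith
      positivity
    intro z₁ hz₁ z₂ hz₂ hlt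
    rw [Set.mem_Ioi, hγ] at hz₁ hz₂
    obtain ⟨hm₁, he₁⟩ := hq₂ z₁ (by rw [hγ]; exact hz₁.le)
    obtain ⟨hm₂, he₂⟩ := hq₂ z₂ (by rw [hγ]; exact hz₂.le)
    have hδ₁ : δ < q z₁ := hfacts z₁ hz₁
    have hδ₂ : δ < q z₂ := hfacts z₂ hz₂
    have hb₁1 : 1 < q z₁ := lt_of_le_of_lt hδ1 hδ₁
    have hb₂1 : 1 < q z₂ := lt_of_le_of_lt hδ1 hδ₂
    have hb₁0 : 0 < q z₁ := lt_trans one_pos hb₁1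
    have hb₂0 : 0 < q z₂ := lt_trans one_pos hb₂1
    have hb12 : q z₁ < q z₂ := by
      rcases lt_trichotomy (q z₁) (q z₂) with h | h | h
      · exact h
      · exfalso; rw [h] at he₁; linarith
      · exfalso
        have := stmt8_aux_p_lt hb₂0 hδ₂.le h
        rw [he₁, he₂] at this
        linarith
    set b₁ := q z₁
    set b₂ := q z₂
    set k := b₂ / b₁ with hkdef
    have hk0 : 0 < k := div_pos hb₂0 hb₁0
    have hk1 : 1 < k := (one_lt_div hb₁0).2 hb12
    have hlogk : Real.log k = Real.log b₂ - Real.log b₁ := Real.log_div hb₂0.ne' hb₁0.ne'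
    have hcval : z₂ - Real.log k - Real.log b₁ = 1 + δ / b₂ := by
      rw [hlogk]; linarith
    have hcpos : 0 < z₂ - Real.log k - Real.log b₁ := by rw [hcval]; positivity
    have hcz : z₂ - Real.log k < z₁ := by
      have hdd : δ / b₂ < δ / b₁ := div_lt_div_of_pos_left hδ hb₁0 hb12
      rw [hlogk]
      linarith
    -- value of c - log 1 = c is positive
    have hc0 : 0 < z₂ - Real.log k := by
      have : Real.log b₁ > 0 := Real.log_pos hb₁1
      linarith
    -- scaling identity
    have e1 : k * (b₁ / b₂) = 1 := by rw [hkdef]; field_simp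
    have e2 : k * b₁ = b₂ := by rw [hkdef]; field_simp
    have ha'0 : 0 < b₁ / b₂ := div_pos hb₁0 hb₂0
    have ha'le1 : b₁ / b₂ ≤ 1 := le_of_lt ((div_lt_one hb₂0).2 hb12)
    have ha'le : b₁ / b₂ ≤ b₁ := le_trans ha'le1 hb₁1.le
    have hscale := stmt8_aux_scale (z := z₂) hk0 ha'0 ha'le hcpos
    rw [e1, e2] at hscale
    -- hscale : ∫ v in 1..b₂, 1/(z₂ - log v) = k * ∫ w in (b₁/b₂)..b₁, 1/(z₂ - log k - log w)
    set c := z₂ - Real.log k with hcdef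
    have hii1 : IntervalIntegrable (fun w : ℝ => 1/(c - Real.log w)) volume (b₁/b₂) 1 := by
      apply stmt8_aux_ii ha'0 ha'le1
      simpa using hc0
    have hii2 : IntervalIntegrable (fun w : ℝ => 1/(c - Real.log w)) volume 1 b₁ :=
      stmt8_aux_ii one_pos hb₁1.le hcpos
    have hii3 : IntervalIntegrable (fun w : ℝ => 1/(z₁ - Real.log w)) volume 1 b₁ := by
      apply stmt8_aux_ii one_pos hb₁1.le
      have : z₁ - Real.log b₁ = 1 + δ / b₁ := by linarith
      rw [this]; positivity
    have hsplitJ := intervalIntegral.integral_add_adjacent_intervals hii1 hii2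
    have hnn1 : 0 ≤ ∫ w in (b₁/b₂)..(1:ℝ), 1/(c - Real.log w) := by
      apply intervalIntegral.integral_nonneg ha'le1
      intro w hw
      have hw0 : 0 < w := lt_of_lt_of_le ha'0 hw.1
      have hlw : Real.log w ≤ 0 := Real.log_nonpos hw0.le hw.2
      have : 0 < c - Real.log w := by linarith
      positivity
    have hmono : (∫ w in (1:ℝ)..b₁, 1/(z₁ - Real.log w))
        ≤ ∫ w in (1:ℝ)..b₁, 1/(c - Real.log w) := by
      apply intervalIntegral.integral_mono_on hb₁1.le hii3 hii2
      intro w hw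
      have hw0 : 0 < w := lt_of_lt_of_le one_pos hw.1
      have hlw : Real.log w ≤ Real.log b₁ := Real.log_le_log hw0 hw.2
      have hcw : 0 < c - Real.log w := by
        have := hcpos; rw [hcdef]; linarith [hcval ▸ hcpos]
      apply one_div_le_one_div_of_le hcw
      linarith
    have hF1pos : 0 < ∫ w in (1:ℝ)..b₁, 1/(z₁ - Real.log w) := hFpos z₁ hz₁
    have hkey : (∫ w in (1:ℝ)..b₁, 1/(z₁ - Real.log w))
        < ∫ v in (1:ℝ)..b₂, 1/(z₂ - Real.log v) := by
      rw [hscale]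
      have hJ : (∫ w in (1:ℝ)..b₁, 1/(z₁ - Real.log w))
          ≤ ∫ w in (b₁/b₂)..b₁, 1/(c - Real.log w) := by
        rw [← hsplitJ]
        linarith
      calc (∫ w in (1:ℝ)..b₁, 1/(z₁ - Real.log w))
          < k * ∫ w in (1:ℝ)..b₁, 1/(z₁ - Real.log w) := by nlinarith
        _ ≤ k * ∫ w in (b₁/b₂)..b₁, 1/(c - Real.log w) := by
            apply mul_le_mul_of_nonneg_left hJ hk0.le
    rw [hΨ z₁, hΨ z₂, hrep z₁ hz₁, hrep z₂ hz₂,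
      div_mul_cancel_left₀ (Real.exp_ne_zero (-z₁)),
      div_mul_cancel_left₀ (Real.exp_ne_zero (-z₂))]
    exact inv_strictAnti₀ hF1pos hkey
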